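/- Pfaff's transformation: let a, b, c ∈ ℂ with c ∉ {0,−1,−2,…}, and let z ∈ ℂ with |z| < 1 and |z/(z−1)| < 1. Then F(a,b;c;z) = (1−z)^{−a} F(a,c−b;c; z/(z−1)), where (1−z)^{−a} is the principal power (well defined since Re(1−z) > 0). -/

import Mathlib

open Complex Polynomial Finset Filter Topology Metric

private lemma pf_pk_succ {S : Type*} [CommSemiring S] (n : ℕ) (x : S) :
    (ascPochhammer S (n+1)).eval x = (ascPochhammer S n).eval x * (x + n) := by
  rw [ascPochhammer_succ_right]
  simp

private lemma pf_pkR_nonneg (n : ℕ) {w : ℝ} (hw : 0 ≤ w) :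
    0 ≤ (ascPochhammer ℝ n).eval w := by
  induction n with
  | zero => simp
  | succ n ih => rw [pf_pk_succ]; positivity

private lemma pf_norm_pk_le (n : ℕ) (s : ℂ) {w : ℝ} (hw : ‖s‖ ≤ w) :
    ‖(ascPochhammer ℂ n).eval s‖ ≤ (ascPochhammer ℝ n).eval w := by
  have hw0 : 0 ≤ w := le_trans (norm_nonneg s) hw
  induction n with
  | zero => simp
  | succ n ih =>
      rw [pf_pk_succ, pf_pk_succ]
      rw [norm_mul]
      apply mul_le_mul ih ?_ (norm_nonneg _) (pf_pkR_nonneg n hw0)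
      calc ‖s + (n:ℂ)‖ ≤ ‖s‖ + ‖(n:ℂ)‖ := norm_add_le _ _
        _ ≤ w + n := by rw [Complex.norm_natCast]; linarith

private lemma pf_pk_ne_zero {c : ℂ} (hc : ∀ n : ℕ, c ≠ -(n : ℂ)) (n : ℕ) :
    (ascPochhammer ℂ n).eval c ≠ 0 := by
  induction n with
  | zero => simp
  | succ n ih =>
      rw [pf_pk_succ]
      refine mul_ne_zero ih ?_
      intro h
      exact hc n (by linear_combination h)

private lemma pf_tendsto_ratio1 (w : ℝ) :
    Tendsto (fun n : ℕ => (w + n) / (n + 1)) atTop (𝓝 1) := by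
  have h : Tendsto (fun n : ℕ => (w - 1) * (1 / (n + 1)) + 1) atTop (𝓝 ((w-1) * 0 + 1)) :=
    ((tendsto_const_nhds.mul tendsto_one_div_add_atTop_nhds_zero_nat).add tendsto_const_nhds)
  simp only [mul_zero, zero_add] at h
  refine h.congr (fun n => ?_)
  have : (n : ℝ) + 1 ≠ 0 := by positivity
  field_simp
  ring

private lemma pf_tendsto_abs (c : ℂ) :
    Tendsto (fun n : ℕ => ‖c + n‖ / (n + 1)) atTop (𝓝 1) := by
  have h0 : Tendsto (fun n : ℕ => ‖c - 1‖ * (1 / (n+1))) atTop (𝓝 0) := by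
    simpa using tendsto_const_nhds.mul (tendsto_one_div_add_atTop_nhds_zero_nat (𝕜 := ℝ))
  have hlo : Tendsto (fun n : ℕ => 1 - ‖c - 1‖ * (1 / (n+1))) atTop (𝓝 1) := by
    simpa using tendsto_const_nhds.sub h0
  have hhi : Tendsto (fun n : ℕ => 1 + ‖c - 1‖ * (1 / (n+1))) atTop (𝓝 1) := by
    simpa using tendsto_const_nhds.add h0
  refine tendsto_of_tendsto_of_tendsto_of_le_of_le hlo hhi (fun n => ?_) (fun n => ?_)
  · have hn : (0:ℝ) < n + 1 := by positivity
    rw [le_div_iff₀ hn]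
    have : ((n:ℝ) + 1) - ‖c - 1‖ ≤ ‖c + n‖ := by
      have h1 : ‖((n:ℂ) + 1)‖ - ‖c - 1‖ ≤ ‖(c - 1) + ((n:ℂ) + 1)‖ := by
        have h := norm_sub_le ((c - 1) + ((n:ℂ) + 1)) (c - 1)
        have he : (c - 1) + ((n:ℂ) + 1) - (c - 1) = ((n:ℂ) + 1) := by ring
        rw [he] at h
        linarith
      have h2 : ‖((n:ℂ) + 1)‖ = (n:ℝ) + 1 := by
        rw [show ((n:ℂ) + 1) = ((n + 1 : ℕ) : ℂ) by push_cast; ring, Complex.norm_natCast]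
        push_cast; ring
      calc ((n:ℝ) + 1) - ‖c - 1‖ = ‖((n:ℂ)+1)‖ - ‖c - 1‖ := by rw [h2]
        _ ≤ ‖(c - 1) + ((n:ℂ) + 1)‖ := h1
        _ = ‖c + n‖ := by ring_nf
    have key : (1 - ‖c - 1‖ * (1/((n:ℝ)+1))) * ((n:ℝ)+1) = ((n:ℝ)+1) - ‖c - 1‖ := by
      field_simp
    rw [key]
    linarith
  · have hn : (0:ℝ) < n + 1 := by positivity
    rw [div_le_iff₀ hn]
    have : ‖c + n‖ ≤ ‖c - 1‖ + ((n:ℝ) + 1) := by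
      have h1 : ‖(c - 1) + ((n:ℂ) + 1)‖ ≤ ‖c - 1‖ + ‖((n:ℂ) + 1)‖ := norm_add_le _ _
      have h2 : ‖((n:ℂ) + 1)‖ = (n:ℝ) + 1 := by
        rw [show ((n:ℂ) + 1) = ((n + 1 : ℕ) : ℂ) by push_cast; ring, Complex.norm_natCast]
        push_cast; ring
      calc ‖c + n‖ = ‖(c - 1) + ((n:ℂ) + 1)‖ := by ring_nf
        _ ≤ ‖c - 1‖ + ((n:ℝ) + 1) := by rw [← h2]; exact h1
    have key : (1 + ‖c - 1‖ * (1/((n:ℝ)+1))) * ((n:ℝ)+1) = ((n:ℝ)+1) + ‖c - 1‖ := by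
      field_simp
    rw [key]
    linarith

private lemma pf_pkR_pos (n : ℕ) {w : ℝ} (hw : 0 < w) : 0 < (ascPochhammer ℝ n).eval w :=
  ascPochhammer_pos n w hw

private lemma pf_summable_SR {w1 w2 : ℝ} (h1 : 0 < w1) (h2 : 0 < w2) {c : ℂ}
    (hc : ∀ n : ℕ, c ≠ -(n : ℂ)) {r : ℝ} (hr0 : 0 < r) (hr1 : r < 1) :
    Summable (fun n : ℕ => (ascPochhammer ℝ n).eval w1 * (ascPochhammer ℝ n).eval w2 /
      (‖(ascPochhammer ℂ n).eval c‖ * n.factorial) * r ^ n) := by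
  set v : ℕ → ℝ := fun n => (ascPochhammer ℝ n).eval w1 * (ascPochhammer ℝ n).eval w2 /
      (‖(ascPochhammer ℂ n).eval c‖ * n.factorial) * r ^ n with hv
  have hvpos : ∀ n, 0 < v n := by
    intro n
    have := pf_pkR_pos n h1
    have := pf_pkR_pos n h2
    have h3 : 0 < ‖(ascPochhammer ℂ n).eval c‖ := norm_pos_iff.2 (pf_pk_ne_zero hc n)
    have h4 : (0:ℝ) < n.factorial := by positivity
    positivity
  have habs : ∀ n : ℕ, ‖c + n‖ ≠ 0 := by
    intro n
    refine norm_ne_zero_iff.2 ?_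
    intro h
    exact hc n (by linear_combination h)
  have hrat : ∀ n : ℕ, v (n+1) / v n =
      ((w1 + n)/(n+1)) * ((w2 + n)/(n+1)) * ((‖c + n‖/(n+1))⁻¹) * r := by
    intro n
    have hpc : ‖(ascPochhammer ℂ n).eval c‖ ≠ 0 := norm_ne_zero_iff.2 (pf_pk_ne_zero hc n)
    have hfac : (n.factorial : ℝ) ≠ 0 := by positivity
    have hn1 : ((n:ℝ) + 1) ≠ 0 := by positivity
    have hcc := habs n
    have hfac2 : ((w1 + n) * (w2 + n) * r / (‖c + n‖ * (n+1))) =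
        (((w1 + n)/(n+1)) * ((w2 + n)/(n+1)) * ((‖c + n‖/(n+1))⁻¹) * r) := by
      rw [inv_div, div_mul_div_comm, div_mul_div_comm, div_mul_eq_mul_div]
      rw [div_eq_div_iff (by positivity) (by positivity)]
      ring
    have hstep : v (n+1) = v n * ((w1 + n) * (w2 + n) * r / (‖c + n‖ * (n+1))) := by
      rw [hv]
      simp only [pf_pk_succ, norm_mul, Nat.factorial_succ, pow_succ]
      push_cast
      rw [div_mul_eq_mul_div, div_mul_eq_mul_div, div_mul_div_comm]
      rw [div_eq_div_iff (by positivity) (by positivity)]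
      ring
    rw [hstep, hfac2, mul_comm, mul_div_assoc, div_self (hvpos n).ne', mul_one]
  have htend : Tendsto (fun n : ℕ => v (n+1) / v n) atTop (𝓝 r) := by
    have : Tendsto (fun n : ℕ => ((w1 + n)/(n+1)) * ((w2 + n)/(n+1)) * ((‖c + n‖/(n+1))⁻¹) * r)
        atTop (𝓝 (1 * 1 * 1⁻¹ * r)) :=
      (((pf_tendsto_ratio1 w1).mul (pf_tendsto_ratio1 w2)).mul
        ((pf_tendsto_abs c).inv₀ one_ne_zero)).mul_const r
    simp only [one_mul, inv_one] at this
    exact Tendsto.congr (fun n => (hrat n).symm) this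
  refine summable_of_ratio_test_tendsto_lt_one hr1 (Eventually.of_forall fun n => (hvpos n).ne') ?_
  refine htend.congr (fun n => ?_)
  rw [Real.norm_of_nonneg (hvpos (n+1)).le, Real.norm_of_nonneg (hvpos n).le]

private lemma pf_one_ne_neg (n : ℕ) : (1 : ℂ) ≠ -(n : ℂ) := by
  intro h
  have := congrArg Complex.re h
  simp at this
  linarith [Nat.cast_nonneg (α := ℝ) n]

private lemma pf_summable_SB {w : ℝ} (hw : 0 < w) {r : ℝ} (hr0 : 0 < r) (hr1 : r < 1) :
    Summable (fun n : ℕ => (ascPochhammer ℝ n).eval w / n.factorial * r ^ n) := by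
  have h := pf_summable_SR hw one_pos pf_one_ne_neg hr0 hr1
  refine h.congr (fun n => ?_)
  have h1 : (ascPochhammer ℝ n).eval 1 = n.factorial := ascPochhammer_eval_one ℝ n
  have h2 : ‖(ascPochhammer ℂ n).eval 1‖ = n.factorial := by
    rw [ascPochhammer_eval_one, Complex.norm_natCast]
  rw [h1, h2]
  have hfac : (n.factorial : ℝ) ≠ 0 := by positivity
  field_simp

private lemma pf_summable {u : ℕ → ℂ} {v : ℕ → ℝ} (hle : ∀ n, ‖u n‖ ≤ v n)
    (hv : ∀ r : ℝ, 0 < r → r < 1 → Summable fun n => v n * r ^ n) {z : ℂ} (hz : ‖z‖ < 1) :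
    Summable (fun n => u n * z ^ n) := by
  set r : ℝ := (‖z‖ + 1) / 2 with hr
  have hr0 : 0 < r := by positivity
  have hzr : ‖z‖ ≤ r := by rw [hr]; linarith
  have hr1 : r < 1 := by rw [hr]; linarith
  refine Summable.of_norm (Summable.of_nonneg_of_le (fun n => norm_nonneg _) (fun n => ?_)
    (hv r hr0 hr1))
  rw [norm_mul, norm_pow]
  exact mul_le_mul (hle n) (pow_le_pow_left₀ (norm_nonneg z) hzr n)
    (by positivity) (le_trans (norm_nonneg _) (hle n))

private lemma pf_deriv_bound_summable {v : ℕ → ℝ} (hv0 : ∀ n, 0 ≤ v n)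
    (hv : ∀ r : ℝ, 0 < r → r < 1 → Summable fun n => v n * r ^ n) {r : ℝ}
    (hr0 : 0 < r) (hr1 : r < 1) :
    Summable (fun n : ℕ => (n : ℝ) * (v n * r ^ (n - 1))) := by
  set R : ℝ := (r + 1) / 2 with hR
  have hR0 : 0 < R := by positivity
  have hrR : r < R := by rw [hR]; linarith
  have hR1 : R < 1 := by rw [hR]; linarith
  set M : ℝ := ∑' n, v n * R ^ n with hM
  have hMle : ∀ n, v n * R ^ n ≤ M :=
    fun n => Summable.le_tsum (hv R hR0 hR1) n (fun m _ => mul_nonneg (hv0 m) (by positivity))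
  have hM0 : 0 ≤ M := tsum_nonneg (fun m => mul_nonneg (hv0 m) (by positivity))
  clear_value M
  clear_value R
  have hgeo : Summable (fun n : ℕ => (M / r) * ((n : ℝ) ^ 1 * (r / R) ^ n)) := by
    refine Summable.mul_left _ (summable_pow_mul_geometric_of_norm_lt_one 1 ?_)
    rw [Real.norm_of_nonneg (div_nonneg hr0.le hR0.le)]
    rw [div_lt_one hR0]
    exact hrR
  refine Summable.of_nonneg_of_le
    (fun n => mul_nonneg (by positivity) (mul_nonneg (hv0 n) (by positivity)))
    (fun n => ?_) hgeo
  match n with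
  | 0 =>
    simp only [Nat.cast_zero, zero_mul]
    exact mul_nonneg (div_nonneg hM0 hr0.le)
      (mul_nonneg (by positivity) (pow_nonneg (div_nonneg hr0.le hR0.le) 0))
  | (n+1) =>
    have h1 : v (n+1) ≤ M / R ^ (n+1) := by
      rw [le_div_iff₀ (by positivity)]
      exact hMle (n+1)
    calc ((n+1 : ℕ) : ℝ) * (v (n+1) * r ^ (n+1-1))
        ≤ ((n+1 : ℕ) : ℝ) * ((M / R ^ (n+1)) * r ^ n) := by
          have : ((n+1 : ℕ):ℝ) ≥ 0 := by positivity
          apply mul_le_mul_of_nonneg_left ?_ this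
          apply mul_le_mul_of_nonneg_right h1 (by positivity)
      _ = (M / r) * (((n+1:ℕ) : ℝ) ^ 1 * (r / R) ^ (n+1)) := by
          rw [div_pow]
          field_simp
          ring
  -- done

private lemma pf_hasDerivAt {u : ℕ → ℂ} {v : ℕ → ℝ} (hle : ∀ n, ‖u n‖ ≤ v n)
    (hv : ∀ r : ℝ, 0 < r → r < 1 → Summable fun n => v n * r ^ n) {z : ℂ} (hz : ‖z‖ < 1) :
    HasDerivAt (fun x : ℂ => ∑' n, u n * x ^ n) (∑' n, u n * ((n : ℂ) * z ^ (n - 1))) z := by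
  have hv0 : ∀ n, 0 ≤ v n := fun n => le_trans (norm_nonneg _) (hle n)
  set r : ℝ := (‖z‖ + 1) / 2 with hr
  have hr0 : 0 < r := by positivity
  have hzr : ‖z‖ < r := by rw [hr]; linarith
  have hr1 : r < 1 := by rw [hr]; linarith
  have hu : Summable (fun n : ℕ => (n : ℝ) * (v n * r ^ (n - 1))) :=
    pf_deriv_bound_summable hv0 hv hr0 hr1
  refine hasDerivAt_tsum_of_isPreconnected hu isOpen_ball (convex_ball (0:ℂ) r).isPreconnected
    (fun n y _ => (hasDerivAt_pow n y).const_mul (u n)) (fun n y hy => ?_) (mem_ball_self hr0)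
    ?_ (by rwa [mem_ball_zero_iff])
  · rw [mem_ball_zero_iff] at hy
    rw [norm_mul, norm_mul, norm_natCast, norm_pow]
    calc ‖u n‖ * ((n : ℝ) * ‖y‖ ^ (n-1)) ≤ v n * ((n:ℝ) * r ^ (n-1)) := by
          apply mul_le_mul (hle n) ?_ (by positivity) (hv0 n)
          exact mul_le_mul_of_nonneg_left
            (pow_le_pow_left₀ (norm_nonneg y) hy.le _) (by positivity)
      _ = (n : ℝ) * (v n * r ^ (n-1)) := by ring
  · refine summable_of_ne_finset_zero (s := {0}) (fun n hn => ?_)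
    simp only [mem_singleton] at hn
    rw [zero_pow hn, mul_zero]

private lemma pf_summable_deriv {u : ℕ → ℂ} {v : ℕ → ℝ} (hle : ∀ n, ‖u n‖ ≤ v n)
    (hv : ∀ r : ℝ, 0 < r → r < 1 → Summable fun n => v n * r ^ n) {z : ℂ} (hz : ‖z‖ < 1) :
    Summable (fun n => u n * ((n : ℂ) * z ^ (n - 1))) := by
  have hv0 : ∀ n, 0 ≤ v n := fun n => le_trans (norm_nonneg _) (hle n)
  set r : ℝ := (‖z‖ + 1) / 2 with hr
  have hr0 : 0 < r := by positivity
  have hzr : ‖z‖ ≤ r := by rw [hr]; linarith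
  have hr1 : r < 1 := by rw [hr]; linarith
  refine Summable.of_norm (Summable.of_nonneg_of_le (fun n => norm_nonneg _) (fun n => ?_)
    (pf_deriv_bound_summable hv0 hv hr0 hr1))
  rw [norm_mul, norm_mul, norm_natCast, norm_pow]
  calc ‖u n‖ * ((n : ℝ) * ‖z‖ ^ (n-1)) ≤ v n * ((n:ℝ) * r ^ (n-1)) := by
        apply mul_le_mul (hle n) ?_ (by positivity) (hv0 n)
        exact mul_le_mul_of_nonneg_left (pow_le_pow_left₀ (norm_nonneg z) hzr _) (by positivity)
    _ = (n : ℝ) * (v n * r ^ (n-1)) := by ring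

private lemma pf_binomial (s z : ℂ) (hz : ‖z‖ < 1) :
    HasSum (fun n : ℕ => (ascPochhammer ℂ n).eval s * z ^ n / n.factorial)
      ((1 - z) ^ (-s)) := by
  set u : ℕ → ℂ := fun n => (ascPochhammer ℂ n).eval s / n.factorial with hu
  set v : ℕ → ℝ := fun n => (ascPochhammer ℝ n).eval (‖s‖ + 1) / n.factorial with hvdef
  have hle : ∀ n, ‖u n‖ ≤ v n := by
    intro n
    rw [hu, hvdef]
    simp only [norm_div, Complex.norm_natCast]
    rw [div_le_div_iff₀ (by positivity) (by positivity)]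
    exact mul_le_mul_of_nonneg_right (pf_norm_pk_le n s (by linarith [norm_nonneg s]))
      (by positivity)
  have hv : ∀ r : ℝ, 0 < r → r < 1 → Summable fun n => v n * r ^ n := by
    intro r hr0 hr1
    exact pf_summable_SB (by positivity) hr0 hr1
  set F : ℂ → ℂ := fun x => ∑' n, u n * x ^ n with hF
  set D : ℂ → ℂ := fun x => ∑' n, u n * ((n : ℂ) * x ^ (n - 1)) with hD
  -- the recurrence
  have A1 : ∀ n : ℕ, u (n+1) * ((n:ℂ)+1) = (s + n) * u n := by
    intro n
    rw [hu]
    simp only [pf_pk_succ, Nat.factorial_succ]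
    have h2 : ((n).factorial : ℂ) ≠ 0 := Nat.cast_ne_zero.2 (n).factorial_ne_zero
    have h3 : ((n:ℂ) + 1) ≠ 0 := by
      intro h
      have := congrArg Complex.re h
      simp at this
      linarith [Nat.cast_nonneg (α := ℝ) n]
    push_cast
    field_simp
  -- the ODE
  have ode : ∀ x : ℂ, ‖x‖ < 1 → (1 - x) * D x = s * F x := by
    intro x hx
    have Sd : Summable (fun n => u n * ((n : ℂ) * x ^ (n - 1))) :=
      pf_summable_deriv hle hv hx
    have Su : Summable (fun n => u n * x ^ n) := pf_summable hle hv hx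
    have hxd : ∀ n : ℕ, x * (u n * ((n : ℂ) * x ^ (n - 1))) = (n : ℂ) * u n * x ^ n := by
      intro n
      match n with
      | 0 => simp
      | (m+1) =>
        push_cast
        ring
    have S2 : Summable (fun n : ℕ => (n : ℂ) * u n * x ^ n) :=
      (Sd.mul_left x).congr hxd
    have hS2val : ∑' n : ℕ, (n : ℂ) * u n * x ^ n = x * D x := by
      simp only [hD]
      rw [← tsum_congr hxd, tsum_mul_left]
    have hshift : D x = ∑' n : ℕ, u (n+1) * (((n:ℂ)+1) * x ^ n) := by
      simp only [hD]
      rw [Summable.tsum_eq_zero_add Sd]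
      simp only [Nat.cast_zero, zero_mul, mul_zero, zero_add]
      apply tsum_congr
      intro n
      push_cast
      ring
    have hterm : ∀ n : ℕ, u (n+1) * (((n:ℂ)+1) * x ^ n)
        = s * (u n * x ^ n) + (n : ℂ) * u n * x ^ n := by
      intro n
      have := A1 n
      calc u (n+1) * (((n:ℂ)+1) * x ^ n) = (u (n+1) * ((n:ℂ)+1)) * x ^ n := by ring
        _ = ((s + n) * u n) * x ^ n := by rw [this]
        _ = s * (u n * x ^ n) + (n : ℂ) * u n * x ^ n := by ring
    have hDval : D x = s * F x + x * D x := by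
      conv_lhs => rw [hshift, tsum_congr hterm]
      rw [Summable.tsum_add (Su.mul_left s) S2, tsum_mul_left, hS2val]
    linear_combination hDval
  -- H is constant
  set H : ℂ → ℂ := fun x => (1 - x) ^ s * F x with hH
  have hHderiv : ∀ x ∈ ball (0:ℂ) 1, HasDerivAt H 0 x := by
    intro x hx
    rw [mem_ball_zero_iff] at hx
    have hslit : (1 - x) ∈ Complex.slitPlane := by
      rw [Complex.mem_slitPlane_iff]
      left
      have : x.re ≤ ‖x‖ := by
        calc x.re ≤ |x.re| := le_abs_self _
          _ ≤ ‖x‖ := Complex.abs_re_le_norm x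
      simp only [Complex.sub_re, Complex.one_re]
      linarith
    have hne : (1 : ℂ) - x ≠ 0 := Complex.slitPlane_ne_zero hslit
    have d1 : HasDerivAt (fun y : ℂ => (1 - y) ^ s) (s * (1-x) ^ (s-1) * (-1)) x :=
      HasDerivAt.cpow_const ((hasDerivAt_id x).const_sub 1) hslit
    have d2 : HasDerivAt F (D x) x := pf_hasDerivAt hle hv hx
    have dH := d1.mul d2
    have key : (1 - x) ^ s = (1 - x) ^ (s - 1) * (1 - x) := by
      nth_rewrite 1 [show s = (s - 1) + 1 by ring]
      rw [Complex.cpow_add _ _ hne, Complex.cpow_one]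
    have hval : s * (1-x) ^ (s-1) * (-1) * F x + (1 - x) ^ s * D x = 0 := by
      rw [key]
      linear_combination (1 - x) ^ (s - 1) * (ode x hx)
    rw [hval] at dH
    exact dH
  have hHconst : H z = H 0 := by
    have hfd : ∀ x ∈ ball (0:ℂ) 1, HasFDerivWithinAt H (0 : ℂ →L[ℝ] ℂ) (ball (0:ℂ) 1) x := by
      intro x hx
      have h1 : HasFDerivAt H (0 : ℂ →L[ℂ] ℂ) x := by
        have := (hHderiv x hx).hasFDerivAt
        rwa [ContinuousLinearMap.toSpanSingleton_zero] at this
      have h2 := h1.restrictScalars ℝ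
      have h3 : ((0 : ℂ →L[ℂ] ℂ).restrictScalars ℝ) = (0 : ℂ →L[ℝ] ℂ) := by
        ext w
        simp
      rw [h3] at h2
      exact h2.hasFDerivWithinAt
    have hb := (convex_ball (0:ℂ) 1).norm_image_sub_le_of_norm_hasFDerivWithin_le
      (C := 0) hfd (fun x _ => by simp) (mem_ball_self one_pos) (by rwa [mem_ball_zero_iff])
    simp only [norm_zero, zero_mul] at hb
    rw [← sub_eq_zero]
    exact norm_le_zero_iff.1 hb
  have hF0 : F 0 = 1 := by
    simp only [hF]
    rw [tsum_eq_single 0 (fun n hn => by rw [zero_pow hn, mul_zero])]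
    simp only [hu]
    simp
  have hH0 : H 0 = 1 := by
    simp only [hH]
    simp only [sub_zero, Complex.one_cpow, one_mul]
    exact hF0
  have hzne : (1 : ℂ) - z ≠ 0 := by
    intro h
    have hz1 : z = 1 := by linear_combination -h
    rw [hz1] at hz
    simp at hz
  have hFz : F z = (1 - z) ^ (-s) := by
    have h1 : (1 - z) ^ s * F z = 1 := by
      have h := hHconst
      rw [hH0] at h
      simpa only [hH] using h
    rw [Complex.cpow_neg]
    exact eq_inv_of_mul_eq_one_right h1
  have hsum : HasSum (fun n => u n * z ^ n) ((1 - z) ^ (-s)) := by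
    rw [← hFz]
    exact (pf_summable hle hv hz).hasSum
  have heq : (fun n : ℕ => (ascPochhammer ℂ n).eval s * z ^ n / n.factorial)
      = fun n => u n * z ^ n := by
    funext n
    rw [hu]
    rw [div_mul_eq_mul_div]
  rw [heq]
  exact hsum

private lemma pf_dpk_succ (n : ℕ) (t : ℂ) :
    (descPochhammer ℂ (n+1)).eval t = (descPochhammer ℂ n).eval t * (t - n) := by
  rw [descPochhammer_succ_right]
  simp

private lemma pf_descVdm (N : ℕ) (x y : ℂ) :
    (descPochhammer ℂ N).eval (x + y) = ∑ ij ∈ Finset.HasAntidiagonal.antidiagonal N,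
      (N.choose ij.1 : ℂ) * ((descPochhammer ℂ ij.1).eval x * (descPochhammer ℂ ij.2).eval y) := by
  induction N with
  | zero => simp
  | succ N ih =>
      rw [Finset.sum_antidiagonal_choose_succ_mul
        (fun i j => (descPochhammer ℂ i).eval x * (descPochhammer ℂ j).eval y) N]
      rw [pf_dpk_succ, ih, Finset.sum_mul, ← Finset.sum_add_distrib]
      apply Finset.sum_congr rfl
      intro ij hij
      have hij' : ij.1 + ij.2 = N := Finset.HasAntidiagonal.mem_antidiagonal.1 hij
      have hc : (N.choose ij.2 : ℂ) = (N.choose ij.1 : ℂ) := by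
        rw [Nat.choose_symm_of_eq_add hij'.symm]
      rw [pf_dpk_succ, pf_dpk_succ, hc, ← hij']
      push_cast
      ring

private lemma pf_chu (b c : ℂ) (N : ℕ) :
    ∑ n ∈ range (N+1), (N.choose n : ℂ) * ((-1)^n * (ascPochhammer ℂ n).eval (c - b)) *
      (ascPochhammer ℂ (N-n)).eval (c + n) = (ascPochhammer ℂ N).eval b := by
  have h1 : (descPochhammer ℂ N).eval ((b - c) + (c + N - 1)) = (ascPochhammer ℂ N).eval b := by
    rw [descPochhammer_eval_eq_ascPochhammer]
    congr 1
    ring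
  rw [← h1, pf_descVdm, Finset.Nat.sum_antidiagonal_eq_sum_range_succ_mk]
  apply Finset.sum_congr rfl
  intro n hn
  have hnN : n ≤ N := by
    have := Finset.mem_range.1 hn
    omega
  have t1 : (-1:ℂ)^n * (ascPochhammer ℂ n).eval (c - b) = (descPochhammer ℂ n).eval (b - c) := by
    rw [show c - b = -(b - c) by ring, ascPochhammer_eval_neg_eq_descPochhammer]
    rw [← mul_assoc, ← mul_pow]
    simp
  have t2 : (ascPochhammer ℂ (N-n)).eval (c + n) = (descPochhammer ℂ (N-n)).eval (c + N - 1) := by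
    rw [descPochhammer_eval_eq_ascPochhammer]
    congr 1
    push_cast [Nat.cast_sub hnN]
    ring
  rw [t1, t2]
  ring

private lemma pf_pk_ofReal (m : ℕ) (w : ℝ) :
    (ascPochhammer ℂ m).eval ((w : ℝ) : ℂ) = (((ascPochhammer ℝ m).eval w : ℝ) : ℂ) := by
  rw [← ascPochhammer_map (algebraMap ℝ ℂ) m, Polynomial.eval_map]
  exact Polynomial.eval₂_at_apply (algebraMap ℝ ℂ) w

private lemma pf_pk_mul (n m : ℕ) (x : ℂ) :
    (ascPochhammer ℂ n).eval x * (ascPochhammer ℂ m).eval (x + n)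
      = (ascPochhammer ℂ (n + m)).eval x := by
  rw [← ascPochhammer_mul]
  simp [Polynomial.eval_comp]

-- the tail sum of real binomial series, with its value
private lemma pf_real_binom {t : ℝ} (ht0 : 0 ≤ t) (ht1 : t < 1) (w : ℝ) :
    HasSum (fun m : ℕ => (ascPochhammer ℝ m).eval w * t ^ m / m.factorial)
      ((1 - t) ^ (-w : ℝ)) := by
  have hb := pf_binomial ((w : ℝ) : ℂ) ((t : ℝ) : ℂ)
    (by rwa [Complex.norm_real, Real.norm_of_nonneg ht0])
  have hterm : ∀ m : ℕ, (ascPochhammer ℂ m).eval ((w:ℝ):ℂ) * ((t:ℝ):ℂ) ^ m / m.factorial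
      = (((ascPochhammer ℝ m).eval w * t ^ m / m.factorial : ℝ) : ℂ) := by
    intro m
    rw [pf_pk_ofReal]
    push_cast
    ring
  have hval : ((1 : ℂ) - (t:ℝ)) ^ (-((w:ℝ):ℂ)) = ((((1 - t) ^ (-w : ℝ) : ℝ)) : ℂ) := by
    rw [show ((1:ℂ) - (t:ℝ)) = (((1 - t : ℝ)) : ℂ) by push_cast; ring,
      show (-((w:ℝ):ℂ)) = (((-w : ℝ)) : ℂ) by push_cast; ring]
    rw [← Complex.ofReal_cpow (by linarith)]
  rw [funext hterm, hval] at hb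
  exact hasSum_ofReal.1 hb

set_option maxHeartbeats 1000000 in
private lemma pf_core (a b c z : ℂ) (hc : ∀ n : ℕ, c ≠ -(n : ℂ)) (hz2 : ‖z‖ < 1/2) :
    (∑' n : ℕ, (ascPochhammer ℂ n).eval a * (ascPochhammer ℂ n).eval b * z ^ n /
        ((ascPochhammer ℂ n).eval c * (n.factorial : ℂ)))
      = (1 - z) ^ (-a) *
          ∑' n : ℕ, (ascPochhammer ℂ n).eval a *
            (ascPochhammer ℂ n).eval (c - b) * (z / (z - 1)) ^ n /
            ((ascPochhammer ℂ n).eval c * (n.factorial : ℂ)) := by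
  rcases eq_or_ne z 0 with hz0 | hz0
  · subst hz0
    rw [tsum_eq_single 0 (fun n hn => by rw [zero_pow hn]; ring)]
    rw [show (0:ℂ)/(0-1) = 0 by norm_num]
    rw [tsum_eq_single 0 (fun n hn => by rw [zero_pow hn]; ring)]
    simp
  -- nonzero z
  have ht0 : 0 < ‖z‖ := norm_pos_iff.2 hz0
  have ht1 : ‖z‖ < 1 := by linarith
  have hz1 : ‖z - 1‖ ≥ 1 - ‖z‖ := by
    have h := norm_sub_le z (z - 1)
    rw [show z - (z - 1) = 1 by ring, norm_one] at h
    linarith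
  have hzm1 : z - 1 ≠ 0 := by
    intro h
    have hz1' : z = 1 := by linear_combination h
    rw [hz1'] at ht1
    norm_num at ht1
  have h1zne : (1:ℂ) - z ≠ 0 := by
    intro h
    apply hzm1
    linear_combination -h
  have hw1 : ‖z / (z - 1)‖ < 1 := by
    rw [norm_div, div_lt_one (norm_pos_iff.2 hzm1)]
    linarith
  set A : ℕ → ℂ := fun n => (ascPochhammer ℂ n).eval a * (ascPochhammer ℂ n).eval (c - b) *
      (-1)^n / ((ascPochhammer ℂ n).eval c * n.factorial) with hA
  set f : ℕ × ℕ → ℂ := fun p => A p.1 * (ascPochhammer ℂ p.2).eval (a + p.1) *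
      z ^ (p.1 + p.2) / (p.2).factorial with hf
  set w0 : ℝ := ‖a‖ + 1 with hw0
  set t : ℝ := ‖z‖ with htdef
  -- the norm bound function
  set g : ℕ × ℕ → ℝ := fun p => (‖A p.1‖ * t ^ p.1) *
      ((ascPochhammer ℝ p.2).eval (w0 + p.1) * t ^ p.2 / (p.2).factorial) with hg
  have hfg : ∀ p, ‖f p‖ ≤ g p := by
    intro ⟨n, m⟩
    rw [hf, hg]
    simp only [norm_div, norm_mul, norm_pow, Complex.norm_natCast]
    rw [div_le_iff₀ (by positivity)]
    have hb1 : ‖(ascPochhammer ℂ m).eval (a + n)‖ ≤ (ascPochhammer ℝ m).eval (w0 + n) := by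
      apply pf_norm_pk_le
      calc ‖a + (n:ℂ)‖ ≤ ‖a‖ + ‖(n:ℂ)‖ := norm_add_le _ _
        _ ≤ w0 + n := by rw [Complex.norm_natCast, hw0]; linarith
    have ht : ‖z‖ ^ (n + m) = t ^ n * t ^ m := by rw [htdef, pow_add]
    rw [ht]
    have hfacpos : (0:ℝ) < (m.factorial : ℝ) := by positivity
    have hstep : ‖A n‖ * ‖(ascPochhammer ℂ m).eval (a + n)‖ * (t ^ n * t ^ m)
        ≤ ‖A n‖ * (ascPochhammer ℝ m).eval (w0 + n) * (t ^ n * t ^ m) := by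
      apply mul_le_mul_of_nonneg_right (mul_le_mul_of_nonneg_left hb1 (norm_nonneg _))
      positivity
    calc ‖A n‖ * ‖(ascPochhammer ℂ m).eval (a + n)‖ * (t ^ n * t ^ m)
        ≤ ‖A n‖ * (ascPochhammer ℝ m).eval (w0 + n) * (t ^ n * t ^ m) := hstep
      _ = ‖A n‖ * t ^ n * ((ascPochhammer ℝ m).eval (w0 + n) * t ^ m / m.factorial)
          * m.factorial := by field_simp
  have h1t : 0 < 1 - t := by rw [htdef]; linarith
  set q : ℝ := t / (1 - t) with hq
  have hq0 : 0 < q := by positivity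
  have hq1 : q < 1 := by
    rw [hq, div_lt_one h1t, htdef]
    linarith
  have hw0pos : 0 < w0 := by rw [hw0]; positivity
  -- summability of the norm bound
  have hAle : ∀ n, ‖A n‖ ≤ (ascPochhammer ℝ n).eval (‖a‖+1) * (ascPochhammer ℝ n).eval (‖c-b‖+1)
      / (‖(ascPochhammer ℂ n).eval c‖ * n.factorial) := by
    intro n
    rw [hA]
    simp only [norm_div, norm_mul, norm_pow, norm_neg, norm_one, one_pow, mul_one,
      Complex.norm_natCast]
    have hd : (0:ℝ) < ‖(ascPochhammer ℂ n).eval c‖ * n.factorial := by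
      have := norm_pos_iff.2 (pf_pk_ne_zero hc n)
      positivity
    rw [div_le_div_iff₀ hd hd]
    apply mul_le_mul_of_nonneg_right ?_ hd.le
    exact mul_le_mul (pf_norm_pk_le n a (by linarith [norm_nonneg a]))
      (pf_norm_pk_le n (c-b) (by linarith [norm_nonneg (c-b)]))
      (norm_nonneg _) (pf_pkR_nonneg n (by positivity))
  have SgN : ∀ n : ℕ, Summable (fun m => g (n, m)) := by
    intro n
    refine ((pf_summable_SB (w := w0 + n) (by positivity) ht0 ht1).mul_left
      (‖A n‖ * t ^ n)).congr (fun m => ?_)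
    rw [hg]
    ring
  have gval : ∀ n : ℕ, ∑' m, g (n, m) = (‖A n‖ * t ^ n) * (1 - t) ^ (-(w0 + n) : ℝ) := by
    intro n
    rw [hg]
    simp only
    rw [tsum_mul_left, (pf_real_binom ht0.le ht1 (w0 + n)).tsum_eq]
  have Ssum : Summable (fun n : ℕ => ∑' m, g (n, m)) := by
    have base : Summable (fun n : ℕ => ‖A n‖ * q ^ n) := by
      refine Summable.of_nonneg_of_le (fun n => by positivity) (fun n => ?_)
        (pf_summable_SR (by positivity : (0:ℝ) < ‖a‖+1) (by positivity : (0:ℝ) < ‖c-b‖+1)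
          hc hq0 hq1)
      exact mul_le_mul_of_nonneg_right (hAle n) (by positivity)
    refine ((base.mul_left ((1-t) ^ (-w0 : ℝ))).congr (fun n => ?_)).congr
      (fun n => (gval n).symm)
    rw [show (-(w0 + (n:ℕ)) : ℝ) = (-w0) + (-((n:ℕ):ℝ)) by push_cast; ring,
      Real.rpow_add h1t,
      show (1-t) ^ (-((n:ℕ):ℝ)) = ((1-t)^n)⁻¹ by
        rw [Real.rpow_neg h1t.le, Real.rpow_natCast],
      hq]
    ring
  have hgnn : ∀ p, 0 ≤ g p := by
    intro ⟨n, m⟩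
    rw [hg]
    have h1 : 0 ≤ (ascPochhammer ℝ m).eval (w0 + n) := pf_pkR_nonneg m (by positivity)
    have h2 : (0:ℝ) < m.factorial := by positivity
    positivity
  have Sg : Summable g := (summable_prod_of_nonneg hgnn).2 ⟨SgN, Ssum⟩
  have Sf : Summable f := Summable.of_norm
    (Summable.of_nonneg_of_le (fun p => norm_nonneg _) hfg Sg)
  have SfN : ∀ n : ℕ, Summable (fun m => f (n, m)) := by
    intro n
    exact Summable.of_norm (Summable.of_nonneg_of_le (fun m => norm_nonneg _)
      (fun m => hfg (n, m)) (SgN n))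
  have hzlt : ‖z‖ < 1 := by rw [← htdef]; exact ht1
  -- rewrite each term of the RHS sum as an inner tsum
  have key : ∀ n : ℕ, (1 - z)^(-a) * ((ascPochhammer ℂ n).eval a *
      (ascPochhammer ℂ n).eval (c - b) * (z/(z-1))^n /
      ((ascPochhammer ℂ n).eval c * n.factorial)) = ∑' m, f (n, m) := by
    intro n
    have hcp : (1 - z) ^ (-(a + (n:ℂ))) = (1 - z) ^ (-a) * ((1 - z)^n)⁻¹ := by
      have h2 : (1 - z) ^ (-(n:ℂ)) = ((1 - z)^n)⁻¹ := by
        rw [Complex.cpow_neg, Complex.cpow_natCast]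
      rw [show -(a + (n:ℂ)) = (-a) + (-(n:ℂ)) by ring, Complex.cpow_add _ _ h1zne, h2]
    have hb := pf_binomial (a + n) z hzlt
    have hpow : (z/(z-1))^n = (-1:ℂ)^n * z^n * ((1-z)^n)⁻¹ := by
      rw [show z/(z-1) = -(z/(1-z)) by rw [show z - 1 = -(1-z) by ring, div_neg],
        neg_pow, div_pow, div_eq_mul_inv]
      ring
    calc (1 - z)^(-a) * ((ascPochhammer ℂ n).eval a *
          (ascPochhammer ℂ n).eval (c - b) * (z/(z-1))^n /
          ((ascPochhammer ℂ n).eval c * n.factorial))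
        = (A n * z^n) * ((1-z) ^ (-(a + (n:ℂ)))) := by
          rw [hpow, hcp, hA]
          ring
      _ = (A n * z^n) * ∑' m : ℕ, ((ascPochhammer ℂ m).eval (a + n) * z^m / m.factorial) := by
          rw [hb.tsum_eq]
      _ = ∑' m : ℕ, (A n * z^n) * ((ascPochhammer ℂ m).eval (a + n) * z^m / m.factorial) :=
          tsum_mul_left.symm
      _ = ∑' m : ℕ, f (n, m) := by
          apply tsum_congr
          intro m
          rw [hf]
          simp only
          rw [pow_add]
          ring
  -- diagonal sums
  have diag : ∀ N : ℕ, ∑ p ∈ Finset.HasAntidiagonal.antidiagonal N, f p =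
      (ascPochhammer ℂ N).eval a * (ascPochhammer ℂ N).eval b * z ^ N /
        ((ascPochhammer ℂ N).eval c * N.factorial) := by
    intro N
    rw [Finset.Nat.sum_antidiagonal_eq_sum_range_succ_mk]
    conv_rhs => rw [← pf_chu b c N]
    rw [Finset.mul_sum, Finset.sum_mul, Finset.sum_div]
    apply Finset.sum_congr rfl
    intro n hn
    have hnN : n ≤ N := by
      have := Finset.mem_range.1 hn
      omega
    have haP := pf_pk_mul n (N-n) a
    rw [Nat.add_sub_cancel' hnN] at haP
    have hcP := pf_pk_mul n (N-n) c
    rw [Nat.add_sub_cancel' hnN] at hcP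
    have hfacN : (N.factorial : ℂ) = (N.choose n) * n.factorial * (N-n).factorial := by
      rw [← Nat.choose_mul_factorial_mul_factorial hnN]
      push_cast
      ring
    have hc1 : (ascPochhammer ℂ n).eval c ≠ 0 := pf_pk_ne_zero hc n
    have hc2 : (ascPochhammer ℂ (N-n)).eval (c + n) ≠ 0 := by
      apply pf_pk_ne_zero
      intro k hk
      exact hc (n + k) (by push_cast; linear_combination hk)
    have hcN : (ascPochhammer ℂ N).eval c ≠ 0 := pf_pk_ne_zero hc N
    have hf1 : (n.factorial : ℂ) ≠ 0 := Nat.cast_ne_zero.2 n.factorial_ne_zero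
    have hf2 : ((N-n).factorial : ℂ) ≠ 0 := Nat.cast_ne_zero.2 (N-n).factorial_ne_zero
    have hCn : ((N.choose n : ℕ) : ℂ) ≠ 0 :=
      Nat.cast_ne_zero.2 (Nat.choose_pos hnN).ne'
    rw [hf, hA]
    simp only
    rw [Nat.add_sub_cancel' hnN]
    rw [← haP, ← hcP, hfacN]
    field_simp
  -- assemble
  have assemble : (1 - z) ^ (-a) *
      (∑' n : ℕ, (ascPochhammer ℂ n).eval a * (ascPochhammer ℂ n).eval (c - b) * (z/(z-1))^n /
        ((ascPochhammer ℂ n).eval c * n.factorial))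
      = ∑' N : ℕ, (ascPochhammer ℂ N).eval a * (ascPochhammer ℂ N).eval b * z ^ N /
        ((ascPochhammer ℂ N).eval c * N.factorial) := by
    rw [← tsum_mul_left, tsum_congr key]
    have hSfe : Summable (fun σ : (Σ N : ℕ, Finset.HasAntidiagonal.antidiagonal N) =>
        f (Finset.HasAntidiagonal.sigmaAntidiagonalEquivProd (A := ℕ) σ)) :=
      (Equiv.summable_iff _).2 Sf
    calc ∑' n : ℕ, ∑' m : ℕ, f (n, m)
        = ∑' p : ℕ × ℕ, f p := (Summable.tsum_prod' Sf SfN).symm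
      _ = ∑' σ : (Σ N : ℕ, Finset.HasAntidiagonal.antidiagonal N),
            f (Finset.HasAntidiagonal.sigmaAntidiagonalEquivProd (A := ℕ) σ) :=
          ((Finset.HasAntidiagonal.sigmaAntidiagonalEquivProd (A := ℕ)).tsum_eq f).symm
      _ = ∑' N : ℕ, ∑' (p : Finset.HasAntidiagonal.antidiagonal N),
            f (Finset.HasAntidiagonal.sigmaAntidiagonalEquivProd (A := ℕ) ⟨N, p⟩) :=
          Summable.tsum_sigma' (fun N => Summable.of_finite) hSfe
      _ = ∑' N : ℕ, ∑ p ∈ Finset.HasAntidiagonal.antidiagonal N, f p := by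
          apply tsum_congr
          intro N
          exact Finset.tsum_subtype (Finset.HasAntidiagonal.antidiagonal N) f
      _ = ∑' N : ℕ, (ascPochhammer ℂ N).eval a * (ascPochhammer ℂ N).eval b * z ^ N /
            ((ascPochhammer ℂ N).eval c * N.factorial) := tsum_congr diag
  exact assemble.symm

private noncomputable def pfS (x y c : ℂ) : ℂ → ℂ := fun z =>
  ∑' n : ℕ, ((ascPochhammer ℂ n).eval x * (ascPochhammer ℂ n).eval y /
    ((ascPochhammer ℂ n).eval c * (n.factorial : ℂ))) * z ^ n

private noncomputable def pfR (a b c : ℂ) : ℂ → ℂ := fun z =>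
  (1 - z) ^ (-a) * pfS a (c - b) c (z / (z - 1))

private lemma pf_coeff (x y : ℂ) {c : ℂ} (hc : ∀ n : ℕ, c ≠ -(n : ℂ)) :
    (∀ n : ℕ, ‖(ascPochhammer ℂ n).eval x * (ascPochhammer ℂ n).eval y /
        ((ascPochhammer ℂ n).eval c * (n.factorial : ℂ))‖
      ≤ (ascPochhammer ℝ n).eval (‖x‖+1) * (ascPochhammer ℝ n).eval (‖y‖+1) /
        (‖(ascPochhammer ℂ n).eval c‖ * n.factorial))
    ∧ (∀ r : ℝ, 0 < r → r < 1 → Summable fun n : ℕ =>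
        ((ascPochhammer ℝ n).eval (‖x‖+1) * (ascPochhammer ℝ n).eval (‖y‖+1) /
        (‖(ascPochhammer ℂ n).eval c‖ * n.factorial)) * r ^ n) := by
  constructor
  · intro n
    simp only [norm_div, norm_mul, Complex.norm_natCast]
    have hd : (0:ℝ) < ‖(ascPochhammer ℂ n).eval c‖ * n.factorial := by
      have := norm_pos_iff.2 (pf_pk_ne_zero hc n)
      positivity
    rw [div_le_div_iff₀ hd hd]
    apply mul_le_mul_of_nonneg_right ?_ hd.le
    exact mul_le_mul (pf_norm_pk_le n x (by linarith [norm_nonneg x]))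
      (pf_norm_pk_le n y (by linarith [norm_nonneg y]))
      (norm_nonneg _) (pf_pkR_nonneg n (by positivity))
  · intro r hr0 hr1
    exact pf_summable_SR (by positivity) (by positivity) hc hr0 hr1

private lemma pfS_hasDerivAt (x y : ℂ) {c : ℂ} (hc : ∀ n : ℕ, c ≠ -(n : ℂ)) {z : ℂ}
    (hz : ‖z‖ < 1) : DifferentiableAt ℂ (pfS x y c) z := by
  obtain ⟨hle, hv⟩ := pf_coeff x y hc
  exact (pf_hasDerivAt hle hv hz).differentiableAt

private lemma pf_re_iff {x : ℂ} (hx1 : x ≠ 1) : ‖x / (x - 1)‖ < 1 ↔ x.re < 1/2 := by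
  have hne : x - 1 ≠ 0 := sub_ne_zero.2 hx1
  rw [norm_div, div_lt_one (norm_pos_iff.2 hne)]
  have key : Complex.normSq (x-1) = Complex.normSq x + 1 - 2 * x.re := by
    simp only [Complex.normSq_apply, Complex.sub_re, Complex.sub_im, Complex.one_re,
      Complex.one_im]
    ring
  constructor
  · intro h
    have h2 : Complex.normSq x < Complex.normSq (x-1) := by
      rw [Complex.normSq_eq_norm_sq, Complex.normSq_eq_norm_sq]
      have h3 : ‖x‖ < ‖x-1‖ := by
        simpa using h
      nlinarith [norm_nonneg x, norm_nonneg (x-1)]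
    linarith
  · intro h
    have h2 : Complex.normSq x < Complex.normSq (x-1) := by linarith
    have h3 := Real.sqrt_lt_sqrt (Complex.normSq_nonneg x) h2
    simpa [Complex.norm_def] using h3


/-- Pfaff's transformation:
`F(a,b;c;z) = (1-z)^(-a) F(a,c-b;c;z/(z-1))` for `c` not a nonpositive
integer, `|z| < 1` and `|z/(z-1)| < 1`. -/
theorem pfaff_transformation (a b c z : ℂ) (hc : ∀ n : ℕ, c ≠ -(n : ℂ))
    (hz : ‖z‖ < 1) (hz' : ‖z / (z - 1)‖ < 1) :
    (∑' n : ℕ, (ascPochhammer ℂ n).eval a * (ascPochhammer ℂ n).eval b * z ^ n /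
        ((ascPochhammer ℂ n).eval c * (n.factorial : ℂ)))
      = (1 - z) ^ (-a) *
          ∑' n : ℕ, (ascPochhammer ℂ n).eval a *
            (ascPochhammer ℂ n).eval (c - b) * (z / (z - 1)) ^ n /
            ((ascPochhammer ℂ n).eval c * (n.factorial : ℂ)) := by
  have hzn : ‖z‖ < 1 := by simpa using hz
  have hz1ne : z ≠ 1 := by
    intro h
    rw [h] at hzn
    norm_num at hzn
  have hre : z.re < 1/2 := (pf_re_iff hz1ne).1 (by simpa using hz')
  set U : Set ℂ := {x : ℂ | x.re < 1/2} ∩ Metric.ball (0:ℂ) 1 with hU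
  have hUopen : IsOpen U :=
    (isOpen_lt Complex.continuous_re continuous_const).inter isOpen_ball
  have hUconv : Convex ℝ U := (convex_halfSpace_re_lt _).inter (convex_ball _ _)
  have hUpre := hUconv.isPreconnected
  have hzU : z ∈ U := ⟨hre, mem_ball_zero_iff.2 hzn⟩
  have h0U : (0:ℂ) ∈ U := by
    constructor
    · show (0:ℂ).re < 1/2
      norm_num
    · exact mem_ball_zero_iff.2 (by norm_num)
  have hUball : ∀ x ∈ U, ‖x‖ < 1 := fun x hx => mem_ball_zero_iff.1 hx.2
  have hUne1 : ∀ x ∈ U, x ≠ 1 := by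
    intro x hx h
    have h1 : x.re < 1/2 := hx.1
    rw [h] at h1
    norm_num at h1
  have hUw : ∀ x ∈ U, ‖x/(x-1)‖ < 1 := fun x hx => (pf_re_iff (hUne1 x hx)).2 hx.1
  have hLdiff : DifferentiableOn ℂ (pfS a b c) U := fun x hx =>
    (pfS_hasDerivAt a b hc (hUball x hx)).differentiableWithinAt
  have hRdiff : DifferentiableOn ℂ (pfR a b c) U := by
    intro x hx
    apply DifferentiableAt.differentiableWithinAt
    have hx1 : ‖x‖ < 1 := hUball x hx
    have hxne1 : x - 1 ≠ 0 := sub_ne_zero.2 (hUne1 x hx)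
    have hslit : (1 - x) ∈ Complex.slitPlane := by
      rw [Complex.mem_slitPlane_iff]
      left
      have h1 : x.re < 1/2 := hx.1
      simp only [Complex.sub_re, Complex.one_re]
      linarith
    have d1 : DifferentiableAt ℂ (fun y : ℂ => (1-y)^(-a)) x :=
      (HasDerivAt.cpow_const ((hasDerivAt_id x).const_sub 1) hslit).differentiableAt
    have d2 : DifferentiableAt ℂ (fun y : ℂ => y/(y-1)) x :=
      differentiableAt_id.div (differentiableAt_id.sub_const 1) hxne1
    have d3 : DifferentiableAt ℂ (pfS a (c-b) c) (x/(x-1)) :=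
      pfS_hasDerivAt a (c-b) hc (hUw x hx)
    exact d1.mul (d3.comp x d2 : DifferentiableAt ℂ (pfS a (c-b) c ∘ fun y => y/(y-1)) x)
  have hLan := hLdiff.analyticOnNhd hUopen
  have hRan := hRdiff.analyticOnNhd hUopen
  have heq0 : pfS a b c =ᶠ[𝓝 (0:ℂ)] pfR a b c := by
    filter_upwards [Metric.ball_mem_nhds (0:ℂ) (by norm_num : (0:ℝ) < 1/2)] with x hx
    rw [mem_ball_zero_iff] at hx
    have hcore := pf_core a b c x hc hx
    have hL : pfS a b c x = ∑' n : ℕ, (ascPochhammer ℂ n).eval a *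
        (ascPochhammer ℂ n).eval b * x ^ n /
        ((ascPochhammer ℂ n).eval c * (n.factorial : ℂ)) := by
      unfold pfS
      exact tsum_congr fun n => by ring
    have hRin : pfS a (c-b) c (x/(x-1)) = ∑' n : ℕ, (ascPochhammer ℂ n).eval a *
        (ascPochhammer ℂ n).eval (c-b) * (x/(x-1)) ^ n /
        ((ascPochhammer ℂ n).eval c * (n.factorial : ℂ)) := by
      unfold pfS
      exact tsum_congr fun n => by ring
    rw [hL, hcore]
    unfold pfR
    rw [hRin]
  have hfinal := AnalyticOnNhd.eqOn_of_preconnected_of_eventuallyEq hLan hRan hUpre h0U heq0 hzU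
  have gL : (∑' n : ℕ, (ascPochhammer ℂ n).eval a * (ascPochhammer ℂ n).eval b * z ^ n /
      ((ascPochhammer ℂ n).eval c * (n.factorial : ℂ))) = pfS a b c z := by
    unfold pfS
    exact tsum_congr fun n => by ring
  have gR : pfR a b c z = (1 - z) ^ (-a) *
      ∑' n : ℕ, (ascPochhammer ℂ n).eval a *
        (ascPochhammer ℂ n).eval (c - b) * (z / (z - 1)) ^ n /
        ((ascPochhammer ℂ n).eval c * (n.factorial : ℂ)) := by
    unfold pfR pfS
    congr 1
    exact tsum_congr fun n => by ring
  rw [gL, hfinal, gR]
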